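/- For any periodic sequences S, Q ⊆ ℝ and any integer k ≥ 1, the oriented and unoriented elastic metrics are independent of taking multiples: Elm^o(kS, Q) = Elm^o(S, Q) and Elm(kS, Q) = Elm(S, Q). -/

import Mathlib

/-- A periodic sequence in `ℝ` with an `m`-point motif `p` and period `l`:
the set `{p i + l * j : i ∈ Fin m, j ∈ ℤ}` where `0 ≤ p 0 < p 1 < ⋯ < p (m-1) < l`. -/
structure PSeq (m : ℕ) where
  m_pos : 0 < m
  l : ℝ
  l_pos : 0 < l
  p : Fin m → ℝ
  p_strict : StrictMono p
  p0_nonneg : 0 ≤ p ⟨0, m_pos⟩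
  p_lt : ∀ i, p i < l

namespace PSeq

variable {m : ℕ}

/-- The set of points of the periodic sequence. -/
def pts (S : PSeq m) : Set ℝ := {x | ∃ (i : Fin m) (j : ℤ), x = S.p i + S.l * j}

/-- The period is minimal: the same set of points cannot be produced with a smaller period. -/
def IsMinimal (S : PSeq m) : Prop := ∀ (m' : ℕ) (T : PSeq m'), T.pts = S.pts → S.l ≤ T.l

/-- The distance list `D` of the periodic sequence, indexed by `ZMod m`:
`D i = p (i+1) - p i` for `i < m - 1`, and `D (m-1) = (p 0 + l) - p (m-1)`. -/
noncomputable def D (S : PSeq m) : ZMod m → ℝ := fun i =>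
  letI : NeZero m := ⟨S.m_pos.ne'⟩
  if h : i.val + 1 < m then S.p ⟨i.val + 1, h⟩ - S.p ⟨i.val, i.val_lt⟩
  else S.p ⟨0, S.m_pos⟩ + S.l - S.p ⟨i.val, i.val_lt⟩

end PSeq

/-- The cyclic shift `σ_s` acting on vectors indexed by `ZMod n`: `(σ_s v) i = v (i + s)`. -/
def shiftVec {n : ℕ} (s : ZMod n) (v : ZMod n → ℝ) : ZMod n → ℝ := fun i => v (i + s)

/-- The reversal `ρ`: `(ρ v) i = v (m - 1 - i)` (note `m - 1 = -1` in `ZMod m`). -/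
def revVec {n : ℕ} (v : ZMod n → ℝ) : ZMod n → ℝ := fun i => v (-1 - i)

/-- The Minkowski sup-norm `‖v‖_∞ = max_i |v i|` of a vector indexed by `ZMod n`, `n > 0`. -/
noncomputable def supNorm {n : ℕ} (hn : 0 < n) (v : ZMod n → ℝ) : ℝ :=
  letI : NeZero n := ⟨hn.ne'⟩
  Finset.univ.sup' (Finset.univ_nonempty_iff.mpr ⟨0⟩) fun i => |v i|

namespace PSeq

/-- The distance list of the multiple `(n / m) S` of a periodic sequence `S` with `m ∣ n`,
i.e. the `(n/m)`-fold concatenation of `D S`, indexed by `ZMod n`. -/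
noncomputable def Dc {m : ℕ} (S : PSeq m) (n : ℕ) : ZMod n → ℝ :=
  fun i => S.D ((i.val : ZMod m))

/-- The oriented elastic metric `Elm^o(S,Q)`: with `n = lcm(m₁, m₂)`, the minimum over all
cyclic shifts `s ∈ ZMod n` of `‖D((n/m₁)S) - σ_s(D((n/m₂)Q))‖_∞`. -/
noncomputable def Elmo {m₁ m₂ : ℕ} (S : PSeq m₁) (Q : PSeq m₂) : ℝ :=
  letI : NeZero (Nat.lcm m₁ m₂) := ⟨(Nat.lcm_pos S.m_pos Q.m_pos).ne'⟩
  Finset.univ.inf' (Finset.univ_nonempty_iff.mpr ⟨0⟩)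
    fun s : ZMod (Nat.lcm m₁ m₂) =>
      supNorm (Nat.lcm_pos S.m_pos Q.m_pos)
        fun i => S.Dc (Nat.lcm m₁ m₂) i - shiftVec s (Q.Dc (Nat.lcm m₁ m₂)) i

/-- The unoriented elastic metric `Elm(S,Q)`: the minimum over all `2n` permutations
`σ_s` and `σ_s ∘ ρ` of `‖D((n/m₁)S) - σ(D((n/m₂)Q))‖_∞`, where `n = lcm(m₁, m₂)`. -/
noncomputable def Elm {m₁ m₂ : ℕ} (S : PSeq m₁) (Q : PSeq m₂) : ℝ :=
  letI : NeZero (Nat.lcm m₁ m₂) := ⟨(Nat.lcm_pos S.m_pos Q.m_pos).ne'⟩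
  min
    (Finset.univ.inf' (Finset.univ_nonempty_iff.mpr ⟨0⟩)
      fun s : ZMod (Nat.lcm m₁ m₂) =>
        supNorm (Nat.lcm_pos S.m_pos Q.m_pos)
          fun i => S.Dc (Nat.lcm m₁ m₂) i - shiftVec s (Q.Dc (Nat.lcm m₁ m₂)) i)
    (Finset.univ.inf' (Finset.univ_nonempty_iff.mpr ⟨0⟩)
      fun s : ZMod (Nat.lcm m₁ m₂) =>
        supNorm (Nat.lcm_pos S.m_pos Q.m_pos)
          fun i => S.Dc (Nat.lcm m₁ m₂) i - shiftVec s (revVec (Q.Dc (Nat.lcm m₁ m₂))) i)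

end PSeq

namespace PSeq

/-- The multiple `k S` of a periodic sequence: period `k * l` and the `k * m`-point motif
`{p i + j * l : 0 ≤ i < m, 0 ≤ j < k}`. -/
def mult {m : ℕ} (S : PSeq m) (k : ℕ) (hk : 0 < k) : PSeq (k * m) where
  m_pos := Nat.mul_pos hk S.m_pos
  l := (k : ℝ) * S.l
  l_pos := mul_pos (by exact_mod_cast hk) S.l_pos
  p := fun r => S.p ⟨r.val % m, Nat.mod_lt _ S.m_pos⟩ + ((r.val / m : ℕ) : ℝ) * S.l
  p_strict := by
    have hple : ∀ i : Fin m, 0 ≤ S.p i := fun i =>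
      le_trans S.p0_nonneg (S.p_strict.monotone (by simp [Fin.le_def]))
    intro r r' hlt
    have hab : r.val < r'.val := hlt
    have hdiv : r.val / m ≤ r'.val / m := Nat.div_le_div_right hab.le
    show S.p ⟨r.val % m, Nat.mod_lt _ S.m_pos⟩ + ((r.val / m : ℕ) : ℝ) * S.l <
      S.p ⟨r'.val % m, Nat.mod_lt _ S.m_pos⟩ + ((r'.val / m : ℕ) : ℝ) * S.l
    rcases lt_or_eq_of_le hdiv with hq | heq
    · have h1 : S.p ⟨r.val % m, Nat.mod_lt _ S.m_pos⟩ < S.l := S.p_lt _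
      have h2 : (0:ℝ) ≤ S.p ⟨r'.val % m, Nat.mod_lt _ S.m_pos⟩ := hple _
      have h3 : ((r.val / m : ℕ) : ℝ) + 1 ≤ ((r'.val / m : ℕ) : ℝ) := by exact_mod_cast hq
      nlinarith [S.l_pos]
    · have hmod : r.val % m < r'.val % m := by
        have e1 := Nat.div_add_mod r.val m
        have e2 := Nat.div_add_mod r'.val m
        rw [heq] at e1
        omega
      have hpp := S.p_strict
        (show (⟨r.val % m, Nat.mod_lt _ S.m_pos⟩ : Fin m) <
          ⟨r'.val % m, Nat.mod_lt _ S.m_pos⟩ from hmod)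
      rw [heq]
      linarith
  p0_nonneg := by
    show (0:ℝ) ≤ S.p ⟨0 % m, Nat.mod_lt _ S.m_pos⟩ + ((0 / m : ℕ) : ℝ) * S.l
    simp only [Nat.zero_mod, Nat.zero_div, Nat.cast_zero, zero_mul, add_zero]
    exact S.p0_nonneg
  p_lt := by
    intro r
    show S.p ⟨r.val % m, Nat.mod_lt _ S.m_pos⟩ + ((r.val / m : ℕ) : ℝ) * S.l < (k : ℝ) * S.l
    have h1 : S.p ⟨r.val % m, Nat.mod_lt _ S.m_pos⟩ < S.l := S.p_lt _
    have h2 : r.val / m < k :=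
      Nat.div_lt_of_lt_mul (lt_of_lt_of_eq r.isLt (Nat.mul_comm k m))
    have h3 : ((r.val / m : ℕ) : ℝ) + 1 ≤ (k : ℝ) := by exact_mod_cast h2
    nlinarith [S.l_pos]

end PSeq


lemma natCast_mod_of_dvd {d : ℕ} (n a : ℕ) (h : d ∣ n) :
    ((a % n : ℕ) : ZMod d) = (a : ZMod d) := by
  conv_rhs => rw [← Nat.div_add_mod a n]
  push_cast
  rw [(ZMod.natCast_eq_zero_iff n d).mpr h]
  ring

section proj
variable {n d : ℕ} [NeZero n] [NeZero d]

/-- projection ZMod n → ZMod d for d ∣ n -/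
noncomputable def projZ (n d : ℕ) [NeZero n] : ZMod n → ZMod d := fun i => (i.val : ZMod d)

lemma projZ_surj (h : d ∣ n) : Function.Surjective (projZ n d) := by
  intro b
  refine ⟨(b.val : ZMod n), ?_⟩
  show (((b.val : ZMod n)).val : ZMod d) = b
  rw [ZMod.val_natCast, natCast_mod_of_dvd n _ h]
  exact ZMod.natCast_rightInverse b

lemma projZ_add (h : d ∣ n) (i j : ZMod n) :
    projZ n d (i + j) = projZ n d i + projZ n d j := by
  show (((i + j).val : ℕ) : ZMod d) = ((i.val : ℕ) : ZMod d) + ((j.val : ℕ) : ZMod d)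
  rw [ZMod.val_add, natCast_mod_of_dvd n _ h]
  push_cast; ring

lemma projZ_neg_one_sub (h : d ∣ n) (i : ZMod n) :
    projZ n d (-1 - i) = -1 - projZ n d i := by
  have key : ∀ x : ZMod n, projZ n d x = ZMod.castHom h (ZMod d) x := by
    intro x
    show ((x.val : ℕ) : ZMod d) = _
    rw [ZMod.natCast_val, ZMod.castHom_apply]
  rw [key, key, map_sub, map_neg, map_one]

end proj

lemma inf'_comp_surj {α β : Type*} [Fintype α] [Fintype β] [Nonempty α] [Nonempty β]
    [DecidableEq α] [DecidableEq β]
    (π : α → β) (hπ : Function.Surjective π) (f : β → ℝ) :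
    Finset.univ.inf' Finset.univ_nonempty (fun a => f (π a)) =
      Finset.univ.inf' Finset.univ_nonempty f := by
  apply le_antisymm
  · apply Finset.le_inf'
    intro b _
    obtain ⟨a, rfl⟩ := hπ b
    exact Finset.inf'_le _ (Finset.mem_univ a)
  · apply Finset.le_inf'
    intro a _
    exact Finset.inf'_le _ (Finset.mem_univ (π a))

lemma sup'_comp_surj {α β : Type*} [Fintype α] [Fintype β] [Nonempty α] [Nonempty β]
    [DecidableEq α] [DecidableEq β]
    (π : α → β) (hπ : Function.Surjective π) (f : β → ℝ) :
    Finset.univ.sup' Finset.univ_nonempty (fun a => f (π a)) =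
      Finset.univ.sup' Finset.univ_nonempty f := by
  apply le_antisymm
  · apply Finset.sup'_le
    intro a _
    exact Finset.le_sup' _ (Finset.mem_univ (π a))
  · apply Finset.sup'_le
    intro b _
    obtain ⟨a, rfl⟩ := hπ b
    exact Finset.le_sup' (fun a => f (π a)) (Finset.mem_univ a)

namespace PSeq

set_option maxHeartbeats 1000000 in
lemma D_mult {m : ℕ} (S : PSeq m) (k : ℕ) (hk : 0 < k) (i : ZMod (k * m)) :
    (S.mult k hk).D i = S.D ((i.val : ZMod m)) := by
  haveI : NeZero m := ⟨S.m_pos.ne'⟩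
  haveI : NeZero (k * m) := ⟨(Nat.mul_pos hk S.m_pos).ne'⟩
  have hv : ((i.val : ZMod m)).val = i.val % m := ZMod.val_natCast _ _
  have hrm : i.val % m < m := Nat.mod_lt _ S.m_pos
  have hlt : i.val < k * m := i.val_lt
  simp only [PSeq.D, hv, PSeq.mult]
  by_cases h1 : i.val + 1 < k * m
  · rw [dif_pos h1]
    by_cases h2 : i.val % m + 1 < m
    · rw [dif_pos h2]
      have e1 : (i.val + 1) % m = i.val % m + 1 := by
        rw [← Nat.mod_add_mod]; exact Nat.mod_eq_of_lt h2
      have e2 : (i.val + 1) / m = i.val / m := by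
        have hnd : ¬ m ∣ (i.val + 1) := by
          intro hd
          have h0 : (i.val + 1) % m = 0 := Nat.mod_eq_zero_of_dvd hd
          omega
        rw [Nat.succ_div, if_neg hnd, add_zero]
      simp only [e1, e2]
      ring
    · rw [dif_neg h2]
      have hm1 : i.val % m + 1 = m := by omega
      have e1 : (i.val + 1) % m = 0 := by
        rw [← Nat.mod_add_mod, hm1, Nat.mod_self]
      have e2 : (i.val + 1) / m = i.val / m + 1 := by
        have hd : m ∣ (i.val + 1) := Nat.dvd_of_mod_eq_zero e1
        rw [Nat.succ_div, if_pos hd]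
      simp only [e1, e2, Nat.zero_mod, Nat.cast_add, Nat.cast_one]
      ring
  · rw [dif_neg h1]
    have hr1 : i.val + 1 = k * m := by omega
    have hd : m ∣ (i.val + 1) := ⟨k, by rw [hr1]; ring⟩
    have h0 : (i.val + 1) % m = 0 := Nat.mod_eq_zero_of_dvd hd
    have h2 : ¬ (i.val % m + 1 < m) := by
      have hmm : (i.val % m + 1) % m = 0 := by rw [Nat.mod_add_mod]; exact h0
      intro hc
      rw [Nat.mod_eq_of_lt hc] at hmm
      omega
    rw [dif_neg h2]
    have hq : i.val / m + 1 = k := by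
      have e2 : (i.val + 1) / m = i.val / m + 1 := by
        rw [Nat.succ_div, if_pos hd]
      have : (i.val + 1) / m = k := by rw [hr1]; exact Nat.mul_div_cancel k S.m_pos
      omega
    have hqR : ((i.val / m : ℕ) : ℝ) + 1 = (k : ℝ) := by exact_mod_cast hq
    simp only [Nat.zero_mod, Nat.zero_div, Nat.cast_zero, zero_mul, add_zero]
    have hl : (k : ℝ) * S.l = ((i.val / m : ℕ) : ℝ) * S.l + S.l := by rw [← hqR]; ring
    linarith

lemma Dc_mult {m : ℕ} (S : PSeq m) (k : ℕ) (hk : 0 < k) (n : ℕ) :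
    (S.mult k hk).Dc n = S.Dc n := by
  haveI : NeZero (k * m) := ⟨(Nat.mul_pos hk S.m_pos).ne'⟩
  funext i
  show (S.mult k hk).D ((i.val : ZMod (k * m))) = S.D ((i.val : ZMod m))
  rw [D_mult]
  congr 1
  rw [ZMod.val_natCast]
  exact natCast_mod_of_dvd (k * m) i.val (dvd_mul_left m k)

lemma Dc_proj {m n d : ℕ} (S : PSeq m) [NeZero n] [NeZero d] (hmd : m ∣ d) (i : ZMod n) :
    S.Dc n i = S.Dc d (projZ n d i) := by
  haveI : NeZero m := ⟨S.m_pos.ne'⟩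
  show S.D ((i.val : ZMod m)) = S.D (((projZ n d i).val : ZMod m))
  congr 1
  show (i.val : ZMod m) = (((i.val : ZMod d)).val : ZMod m)
  rw [ZMod.val_natCast]
  exact (natCast_mod_of_dvd d i.val hmd).symm

end PSeq

lemma infsup_shift_transfer {n₁ n₂ : ℕ} [NeZero n₁] [NeZero n₂] (hd : n₂ ∣ n₁)
    (f g : ZMod n₂ → ℝ) :
    (Finset.univ.inf' (Finset.univ_nonempty_iff.mpr ⟨0⟩) fun s : ZMod n₁ =>
       Finset.univ.sup' (Finset.univ_nonempty_iff.mpr ⟨0⟩) fun i =>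
         |f (projZ n₁ n₂ i) - g (projZ n₁ n₂ (i + s))|) =
    (Finset.univ.inf' (Finset.univ_nonempty_iff.mpr ⟨0⟩) fun s : ZMod n₂ =>
       Finset.univ.sup' (Finset.univ_nonempty_iff.mpr ⟨0⟩) fun i =>
         |f i - g (i + s)|) := by
  have hπ : Function.Surjective (projZ n₁ n₂) := projZ_surj hd
  have step : ∀ s : ZMod n₁,
      (Finset.univ.sup' (Finset.univ_nonempty_iff.mpr ⟨0⟩) fun i : ZMod n₁ =>
        |f (projZ n₁ n₂ i) - g (projZ n₁ n₂ (i + s))|) =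
      (Finset.univ.sup' (Finset.univ_nonempty_iff.mpr ⟨0⟩) fun i : ZMod n₂ =>
        |f i - g (i + projZ n₁ n₂ s)|) := by
    intro s
    simp only [projZ_add hd]
    exact sup'_comp_surj (projZ n₁ n₂) hπ (fun i => |f i - g (i + projZ n₁ n₂ s)|)
  simp only [step]
  exact inf'_comp_surj (projZ n₁ n₂) hπ
    (fun s => Finset.univ.sup' (Finset.univ_nonempty_iff.mpr ⟨0⟩) fun i => |f i - g (i + s)|)

/-- the oriented and unoriented elastic metrics are independent of
taking multiples: `Elm^o(kS,Q) = Elm^o(S,Q)` and `Elm(kS,Q) = Elm(S,Q)`. -/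
theorem elastic_metrics_of_multiple {m₁ m₂ : ℕ} (S : PSeq m₁) (Q : PSeq m₂)
    (k : ℕ) (hk : 0 < k) :
    PSeq.Elmo (S.mult k hk) Q = PSeq.Elmo S Q ∧
    PSeq.Elm (S.mult k hk) Q = PSeq.Elm S Q := by
  have hm1 : 0 < m₁ := S.m_pos
  have hm2 : 0 < m₂ := Q.m_pos
  haveI : NeZero (Nat.lcm (k * m₁) m₂) := ⟨(Nat.lcm_pos (Nat.mul_pos hk hm1) hm2).ne'⟩
  haveI : NeZero (Nat.lcm m₁ m₂) := ⟨(Nat.lcm_pos hm1 hm2).ne'⟩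
  have hdd : Nat.lcm m₁ m₂ ∣ Nat.lcm (k * m₁) m₂ :=
    Nat.lcm_dvd ((dvd_mul_left m₁ k).trans (Nat.dvd_lcm_left _ _)) (Nat.dvd_lcm_right _ _)
  have eS : ∀ i : ZMod (Nat.lcm (k * m₁) m₂),
      S.Dc (Nat.lcm (k * m₁) m₂) i =
        S.Dc (Nat.lcm m₁ m₂) (projZ (Nat.lcm (k * m₁) m₂) (Nat.lcm m₁ m₂) i) :=
    fun i => PSeq.Dc_proj S (Nat.dvd_lcm_left _ _) i
  have eQ : ∀ i : ZMod (Nat.lcm (k * m₁) m₂),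
      Q.Dc (Nat.lcm (k * m₁) m₂) i =
        Q.Dc (Nat.lcm m₁ m₂) (projZ (Nat.lcm (k * m₁) m₂) (Nat.lcm m₁ m₂) i) :=
    fun i => PSeq.Dc_proj Q (Nat.dvd_lcm_right _ _) i
  refine ⟨?_, ?_⟩
  · simp only [PSeq.Elmo, supNorm, shiftVec, PSeq.Dc_mult]
    simp only [eS, eQ]
    exact infsup_shift_transfer hdd (S.Dc (Nat.lcm m₁ m₂)) (Q.Dc (Nat.lcm m₁ m₂))
  · simp only [PSeq.Elm, supNorm, shiftVec, revVec, PSeq.Dc_mult]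
    simp only [eS, eQ, projZ_neg_one_sub hdd]
    congr 1
    · exact infsup_shift_transfer hdd (S.Dc (Nat.lcm m₁ m₂)) (Q.Dc (Nat.lcm m₁ m₂))
    · exact infsup_shift_transfer hdd (S.Dc (Nat.lcm m₁ m₂))
        (fun x => Q.Dc (Nat.lcm m₁ m₂) (-1 - x))
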